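/- Rényi-entropy bound on truncation error: Let λ : ℕ → ℝ be a nonincreasing sequence of nonnegative reals with ∑_{i=0}^∞ λ_i = 1 (summable), and let 0 < α < 1 be such that the sequence (λ_i^α) is summable. Define the truncation error ε(D) = ∑_{i=D}^∞ λ_i (the tail after removing the D largest values) and the Rényi entropy S_α = (1/(1−α))·log(∑_{i=0}^∞ λ_i^α). Then for every D ≥ 1, ε(D) ≤ exp( ((1−α)/α) · ( S_α − log(D/(1−α)) ) ). -/

import Mathlib

set_option maxHeartbeats 1000000


open scoped BigOperators
open Real

/-- AM-GM step: for `0 ≤ A ≤ S`, `A^((1-α)/α) * (S - A) ≤ (1-α)^((1-α)/α) * S^(1/α)`. -/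
lemma amgm_aux {α A S : ℝ} (hα0 : 0 < α) (hα1 : α < 1) (hA : 0 ≤ A) (hAS : A ≤ S) :
    A ^ ((1 - α) / α) * (S - A) ≤ (1 - α) ^ ((1 - α) / α) * S ^ (1 / α) := by
  have h1α : 0 < 1 - α := by linarith
  have hS : 0 ≤ S := le_trans hA hAS
  have hB : 0 ≤ S - A := by linarith
  have hp₂ : 0 ≤ (S - A) * (1 - α) / α := by positivity
  have key := Real.geom_mean_le_arith_mean2_weighted h1α.le hα0.le hA hp₂ (by ring)
  have hrhs : (1 - α) * A + α * ((S - A) * (1 - α) / α) = (1 - α) * S := by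
    field_simp; ring
  rw [hrhs] at key
  -- raise to power 1/α
  have key2 := Real.rpow_le_rpow (by positivity) key (by positivity : (0:ℝ) ≤ 1 / α)
  have hL : (A ^ (1 - α) * ((S - A) * (1 - α) / α) ^ α) ^ (1 / α)
      = A ^ ((1 - α) / α) * ((S - A) * (1 - α) / α) := by
    rw [Real.mul_rpow (by positivity) (by positivity),
      ← Real.rpow_mul hA, ← Real.rpow_mul hp₂]
    rw [mul_one_div, mul_one_div, div_self hα0.ne', Real.rpow_one]
  have hR : ((1 - α) * S) ^ (1 / α) = (1 - α) ^ (1 / α) * S ^ (1 / α) :=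
    Real.mul_rpow h1α.le hS
  rw [hL, hR] at key2
  have h1a : (1 - α) ^ (1 / α) = (1 - α) ^ ((1 - α) / α) * (1 - α) := by
    have he : 1 / α = (1 - α) / α + 1 := by field_simp; ring
    rw [he, Real.rpow_add h1α, Real.rpow_one]
  -- multiply key2 by α/(1-α)
  have := mul_le_mul_of_nonneg_right key2 (by positivity : (0:ℝ) ≤ α / (1 - α))
  calc A ^ ((1 - α) / α) * (S - A)
      = A ^ ((1 - α) / α) * ((S - A) * (1 - α) / α) * (α / (1 - α)) := by
        field_simp
    _ ≤ (1 - α) ^ (1 / α) * S ^ (1 / α) * (α / (1 - α)) := this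
    _ = (1 - α) ^ ((1 - α) / α) * S ^ (1 / α) * α := by
        rw [h1a]; field_simp
    _ ≤ (1 - α) ^ ((1 - α) / α) * S ^ (1 / α) * 1 := by
        apply mul_le_mul_of_nonneg_left hα1.le (by positivity)
    _ = (1 - α) ^ ((1 - α) / α) * S ^ (1 / α) := mul_one _

/-- **Rényi-entropy bound on the truncation error.** Let `λ : ℕ → ℝ` be a nonincreasing
nonnegative summable sequence with total sum `1`, and let `0 < α < 1` be such that
`(λ_i^α)` is summable. Then the tail `ε(D) = ∑_{i ≥ D} λ_i` satisfies
`ε(D) ≤ exp( ((1−α)/α) · (S_α − log(D/(1−α))) )` for every `D ≥ 1`, where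
`S_α = (1/(1−α))·log(∑ λ_i^α)` is the Rényi entropy. -/
theorem renyi_entropy_truncation_bound (lam : ℕ → ℝ)
    (hmono : Antitone lam) (hnonneg : ∀ i, 0 ≤ lam i)
    (hsum : Summable lam) (htotal : ∑' i, lam i = 1)
    (α : ℝ) (hα0 : 0 < α) (hα1 : α < 1)
    (hsumα : Summable fun i => lam i ^ α) :
    ∀ D : ℕ, 1 ≤ D →
      (∑' i : ℕ, lam (i + D)) ≤
        Real.exp (((1 - α) / α) *
          ((1 / (1 - α)) * Real.log (∑' i : ℕ, lam i ^ α) -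
            Real.log ((D : ℝ) / (1 - α)))) := by
  intro D hD
  have h1α : 0 < 1 - α := by linarith
  set β : ℝ := (1 - α) / α with hβdef
  have hβpos : 0 < β := div_pos h1α hα0
  set S : ℝ := ∑' i, lam i ^ α with hSdef
  have hDpos : (0:ℝ) < D := by exact_mod_cast hD
  -- positivity of S
  have hlam0 : 0 < lam 0 := by
    by_contra h
    push_neg at h
    have hz : ∀ i, lam i = 0 := fun i =>
      le_antisymm (le_trans (hmono (Nat.zero_le i)) h) (hnonneg i)
    rw [tsum_congr hz] at htotal
    simp at htotal
  have hSpos : 0 < S :=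
    Summable.tsum_pos hsumα (fun i => Real.rpow_nonneg (hnonneg i) α) 0
      (Real.rpow_pos_of_pos hlam0 α)
  set A : ℝ := ∑ i ∈ Finset.range D, lam i ^ α with hAdef
  set B : ℝ := ∑' i, lam (i + D) ^ α with hBdef
  have hsumα' : Summable fun i => lam (i + D) ^ α := by
    exact (summable_nat_add_iff D).2 hsumα
  have hAB : A + B = S := Summable.sum_add_tsum_nat_add D hsumα
  have hAnn : 0 ≤ A :=
    Finset.sum_nonneg fun i _ => Real.rpow_nonneg (hnonneg i) α
  have hBnn : 0 ≤ B := tsum_nonneg fun i => Real.rpow_nonneg (hnonneg _) α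
  have hAS : A ≤ S := by linarith
  -- tail bound: ε ≤ lam D ^ (1-α) * B
  have hstep1 : (∑' i : ℕ, lam (i + D)) ≤ lam D ^ (1 - α) * B := by
    rw [hBdef, ← tsum_mul_left]
    refine Summable.tsum_le_tsum (fun i => ?_) ((summable_nat_add_iff D).2 hsum)
      (hsumα'.mul_left (lam D ^ (1 - α)))
    rcases (hnonneg (i + D)).lt_or_eq with hpos | hzero
    · have heq : lam (i + D) = lam (i + D) ^ (1 - α) * lam (i + D) ^ α := by
        rw [← Real.rpow_add hpos]; simp
      calc lam (i + D) = lam (i + D) ^ (1 - α) * lam (i + D) ^ α := heq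
        _ ≤ lam D ^ (1 - α) * lam (i + D) ^ α := by
            apply mul_le_mul_of_nonneg_right _ (Real.rpow_nonneg (hnonneg _) α)
            exact Real.rpow_le_rpow (hnonneg _) (hmono (Nat.le_add_left D i)) h1α.le
    · rw [← hzero]
      exact mul_nonneg (Real.rpow_nonneg (hnonneg D) _) (Real.rpow_nonneg le_rfl _)
  -- lam D ^ (1-α) ≤ (A/D)^β
  have hDA : (D : ℝ) * lam D ^ α ≤ A := by
    have : ∀ i ∈ Finset.range D, lam D ^ α ≤ lam i ^ α := fun i hi =>
      Real.rpow_le_rpow (hnonneg D)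
        (hmono (le_of_lt (Finset.mem_range.1 hi))) hα0.le
    calc (D : ℝ) * lam D ^ α = ∑ _i ∈ Finset.range D, lam D ^ α := by
          rw [Finset.sum_const, Finset.card_range, nsmul_eq_mul]
      _ ≤ A := Finset.sum_le_sum this
  have hstep2 : lam D ^ (1 - α) ≤ (A / D) ^ β := by
    have h1 : lam D ^ α ≤ A / D := (le_div_iff₀ hDpos).2 (by linarith [hDA])
    have h2 : lam D ^ (1 - α) = (lam D ^ α) ^ β := by
      rw [← Real.rpow_mul (hnonneg D)]
      congr 1
      rw [hβdef]
      field_simp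
    rw [h2]
    exact Real.rpow_le_rpow (Real.rpow_nonneg (hnonneg D) α) h1 hβpos.le
  -- combine
  have hADβ : (A / D) ^ β = A ^ β / (D : ℝ) ^ β :=
    Real.div_rpow hAnn (le_of_lt hDpos) β
  have hkey : A ^ β * B ≤ (1 - α) ^ β * S ^ (1 / α) := by
    have := amgm_aux hα0 hα1 hAnn hAS
    have hB' : B = S - A := by linarith
    rw [hB']
    exact this
  -- rewrite RHS
  have hRHS : Real.exp (β * ((1 / (1 - α)) * Real.log S - Real.log ((D : ℝ) / (1 - α))))
      = S ^ (1 / α) * ((1 - α) / D) ^ β := by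
    have hloginv : Real.log ((1 - α) / (D : ℝ)) = - Real.log ((D : ℝ) / (1 - α)) := by
      rw [← Real.log_inv, inv_div]
    have hβ1 : β * (1 / (1 - α)) = 1 / α := by
      rw [hβdef]; field_simp
    have e1 : β * ((1 / (1 - α)) * Real.log S - Real.log ((D : ℝ) / (1 - α)))
        = Real.log S * (1 / α) + Real.log ((1 - α) / D) * β := by
      rw [hloginv, mul_sub, ← mul_assoc, hβ1]
      ring
    rw [e1, Real.exp_add, ← Real.rpow_def_of_pos hSpos,
      ← Real.rpow_def_of_pos (by positivity : (0:ℝ) < (1 - α) / D)]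
  rw [hRHS]
  calc (∑' i : ℕ, lam (i + D)) ≤ lam D ^ (1 - α) * B := hstep1
    _ ≤ (A / D) ^ β * B := mul_le_mul_of_nonneg_right hstep2 hBnn
    _ = A ^ β * B / (D : ℝ) ^ β := by rw [hADβ]; ring
    _ ≤ (1 - α) ^ β * S ^ (1 / α) / (D : ℝ) ^ β := by
        have hd : (0:ℝ) < (D : ℝ) ^ β := Real.rpow_pos_of_pos hDpos β
        gcongr
    _ = S ^ (1 / α) * ((1 - α) / D) ^ β := by
        rw [Real.div_rpow h1α.le hDpos.le]; ring
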